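/- Let \mu be a compactly supported Borel probability measure with finite quasi-upper Assouad dimension. Then for every \theta \in (0,1): the \leq-version upper Assouad spectrum satisfies \overline{dim}_A^{\leq\theta}\mu = sup_{0<\psi\leq\theta} \overline{dim}_A^{=\psi}\mu, and the \leq-version lower Assouad spectrum satisfies \underline{dim}_A^{\leq\theta}\mu = inf_{0<\psi\leq\theta} \underline{dim}_A^{=\psi}\mu. -/

import Mathlib

open MeasureTheory Metric Set
open scoped ENNReal

def msupp {X : Type*} [MetricSpace X] [MeasurableSpace X] (μ : Measure X) : Set X :=
  {x | ∀ r > 0, 0 < μ (ball x r)}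

def lowerHSet {X : Type*} [MetricSpace X] [MeasurableSpace X] (μ : Measure X) (δ : ℝ) : Set ℝ :=
  {s | 0 ≤ s ∧ ∃ c₁ > (0:ℝ), ∃ c₂ > (0:ℝ), ∀ x ∈ msupp μ, ∀ r R : ℝ,
    0 < r → 0 < R → r ≤ R ^ (1 + δ) → R ^ (1 + δ) ≤ c₁ →
    c₂ * (R / r) ^ s * (μ (ball x r)).toReal ≤ (μ (ball x R)).toReal}

def upperHSet {X : Type*} [MetricSpace X] [MeasurableSpace X] (μ : Measure X) (δ : ℝ) : Set ℝ :=
  {s | 0 ≤ s ∧ ∃ c₁ > (0:ℝ), ∃ c₂ > (0:ℝ), ∀ x ∈ msupp μ, ∀ r R : ℝ,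
    0 < r → 0 < R → r ≤ R ^ (1 + δ) → R ^ (1 + δ) ≤ c₁ →
    (μ (ball x R)).toReal ≤ c₂ * (R / r) ^ s * (μ (ball x r)).toReal}

/-- The "=θ" upper Assouad spectrum of a measure. -/
noncomputable def upperEq {X : Type*} [MetricSpace X] [MeasurableSpace X]
    (μ : Measure X) (θ : ℝ) : ℝ :=
  sInf {s | 0 ≤ s ∧ ∃ c > (0:ℝ), ∃ R₀ > (0:ℝ), ∀ x ∈ msupp μ, ∀ R : ℝ, 0 < R → R ≤ R₀ →
    (μ (ball x R)).toReal ≤ c * (R ^ (1 - 1 / θ)) ^ s * (μ (ball x (R ^ (1 / θ)))).toReal}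

/-- The "=θ" lower Assouad spectrum of a measure. -/
noncomputable def lowerEq {X : Type*} [MetricSpace X] [MeasurableSpace X]
    (μ : Measure X) (θ : ℝ) : ℝ :=
  sSup {s | 0 ≤ s ∧ ∃ c > (0:ℝ), ∃ R₀ > (0:ℝ), ∀ x ∈ msupp μ, ∀ R : ℝ, 0 < R → R ≤ R₀ →
    c * (R ^ (1 - 1 / θ)) ^ s * (μ (ball x (R ^ (1 / θ)))).toReal ≤ (μ (ball x R)).toReal}

section Aux

variable {X : Type*} [MetricSpace X] [MeasurableSpace X]

/-- ball measure as a real number -/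
noncomputable def fb (μ : Measure X) (x : X) (r : ℝ) : ℝ := (μ (ball x r)).toReal

lemma fb_nonneg (μ : Measure X) (x : X) (r : ℝ) : 0 ≤ fb μ x r := ENNReal.toReal_nonneg

lemma fb_mono (μ : Measure X) [IsProbabilityMeasure μ] (x : X) {r₁ r₂ : ℝ} (h : r₁ ≤ r₂) :
    fb μ x r₁ ≤ fb μ x r₂ :=
  ENNReal.toReal_mono (measure_ne_top μ _) (measure_mono (ball_subset_ball h))

lemma fb_pos (μ : Measure X) [IsProbabilityMeasure μ] {x : X} (hx : x ∈ msupp μ) {r : ℝ}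
    (hr : 0 < r) : 0 < fb μ x r := ENNReal.toReal_pos (hx r hr).ne' (measure_ne_top μ _)

def uSet (μ : Measure X) (ψ : ℝ) : Set ℝ :=
  {s | 0 ≤ s ∧ ∃ c > (0:ℝ), ∃ R₀ > (0:ℝ), ∀ x ∈ msupp μ, ∀ R : ℝ, 0 < R → R ≤ R₀ →
    fb μ x R ≤ c * (R ^ (1 - 1 / ψ)) ^ s * fb μ x (R ^ (1 / ψ))}

def lSet (μ : Measure X) (ψ : ℝ) : Set ℝ :=
  {s | 0 ≤ s ∧ ∃ c > (0:ℝ), ∃ R₀ > (0:ℝ), ∀ x ∈ msupp μ, ∀ R : ℝ, 0 < R → R ≤ R₀ →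
    c * (R ^ (1 - 1 / ψ)) ^ s * fb μ x (R ^ (1 / ψ)) ≤ fb μ x R}

lemma upperEq_def (μ : Measure X) (ψ : ℝ) : upperEq μ ψ = sInf (uSet μ ψ) := rfl

lemma lowerEq_def (μ : Measure X) (ψ : ℝ) : lowerEq μ ψ = sSup (lSet μ ψ) := rfl

lemma uSet_bddBelow (μ : Measure X) (ψ : ℝ) : BddBelow (uSet μ ψ) :=
  ⟨0, fun _ hy => hy.1⟩

lemma upperHSet_bddBelow (μ : Measure X) (δ : ℝ) : BddBelow (upperHSet μ δ) :=
  ⟨0, fun _ hy => hy.1⟩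

/-- substitution: a "≤" bound at δ gives an "=ψ" bound whenever 1+δ ≤ 1/ψ. -/
lemma subU (μ : Measure X) {ψ δ : ℝ} (hδ0 : 0 ≤ δ) (hδ : 1 + δ ≤ 1/ψ) :
    upperHSet μ δ ⊆ uSet μ ψ := by
  rintro s ⟨hs0, c₁, hc₁, c₂, hc₂, H⟩
  refine ⟨hs0, c₂, hc₂, min c₁ 1, by positivity, ?_⟩
  intro x hx R hR hRle
  have hR1 : R ≤ 1 := le_trans hRle (min_le_right _ _)
  have hRδ : R ^ (1+δ) ≤ R := by
    calc R ^ (1+δ) ≤ R ^ (1:ℝ) := Real.rpow_le_rpow_of_exponent_ge hR hR1 (by linarith)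
    _ = R := Real.rpow_one R
  have key := H x hx (R ^ (1/ψ)) R (Real.rpow_pos_of_pos hR _) hR
      (Real.rpow_le_rpow_of_exponent_ge hR hR1 hδ)
      (le_trans hRδ (le_trans hRle (min_le_left _ _)))
  have hdiv : R / R ^ (1/ψ : ℝ) = R ^ (1 - 1/ψ) := by
    rw [Real.rpow_sub hR, Real.rpow_one]
  rwa [hdiv] at key

lemma subL (μ : Measure X) {ψ δ : ℝ} (hδ0 : 0 ≤ δ) (hδ : 1 + δ ≤ 1/ψ) :
    lowerHSet μ δ ⊆ lSet μ ψ := by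
  rintro s ⟨hs0, c₁, hc₁, c₂, hc₂, H⟩
  refine ⟨hs0, c₂, hc₂, min c₁ 1, by positivity, ?_⟩
  intro x hx R hR hRle
  have hR1 : R ≤ 1 := le_trans hRle (min_le_right _ _)
  have hRδ : R ^ (1+δ) ≤ R := by
    calc R ^ (1+δ) ≤ R ^ (1:ℝ) := Real.rpow_le_rpow_of_exponent_ge hR hR1 (by linarith)
    _ = R := Real.rpow_one R
  have key := H x hx (R ^ (1/ψ)) R (Real.rpow_pos_of_pos hR _) hR
      (Real.rpow_le_rpow_of_exponent_ge hR hR1 hδ)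
      (le_trans hRδ (le_trans hRle (min_le_left _ _)))
  have hdiv : R / R ^ (1/ψ : ℝ) = R ^ (1 - 1/ψ) := by
    rw [Real.rpow_sub hR, Real.rpow_one]
  rwa [hdiv] at key

lemma uSet_upward (μ : Measure X) {ψ s s' : ℝ} (hψ0 : 0 < ψ) (hψ1 : ψ ≤ 1)
    (hs : s ∈ uSet μ ψ) (hss' : s ≤ s') : s' ∈ uSet μ ψ := by
  obtain ⟨hs0, c, hc, R₀, hR₀, H⟩ := hs
  refine ⟨le_trans hs0 hss', c, hc, min R₀ 1, by positivity, ?_⟩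
  intro x hx R hR hRle
  have hR1 : R ≤ 1 := le_trans hRle (min_le_right _ _)
  have hb : (1:ℝ) ≤ R ^ (1 - 1/ψ) := by
    apply Real.one_le_rpow_of_pos_of_le_one_of_nonpos hR hR1
    have : (1:ℝ) ≤ 1/ψ := by
      rw [le_div_iff₀ hψ0]; linarith
    linarith
  refine le_trans (H x hx R hR (le_trans hRle (min_le_left _ _))) ?_
  have h2 : (R ^ (1 - 1/ψ)) ^ s ≤ (R ^ (1 - 1/ψ)) ^ s' :=
    Real.rpow_le_rpow_of_exponent_le hb hss'
  calc c * (R ^ (1 - 1/ψ)) ^ s * fb μ x (R ^ (1/ψ)) ≤ c * (R ^ (1 - 1/ψ)) ^ s' * fb μ x (R ^ (1/ψ)) :=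
    mul_le_mul_of_nonneg_right (mul_le_mul_of_nonneg_left h2 hc.le) (fb_nonneg μ x _)
  _ = _ := rfl

lemma lSet_downward (μ : Measure X) {ψ s s' : ℝ} (hψ0 : 0 < ψ) (hψ1 : ψ ≤ 1)
    (hs : s ∈ lSet μ ψ) (hs'0 : 0 ≤ s') (hss' : s' ≤ s) : s' ∈ lSet μ ψ := by
  obtain ⟨hs0, c, hc, R₀, hR₀, H⟩ := hs
  refine ⟨hs'0, c, hc, min R₀ 1, by positivity, ?_⟩
  intro x hx R hR hRle
  have hR1 : R ≤ 1 := le_trans hRle (min_le_right _ _)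
  have hb : (1:ℝ) ≤ R ^ (1 - 1/ψ) := by
    apply Real.one_le_rpow_of_pos_of_le_one_of_nonpos hR hR1
    have : (1:ℝ) ≤ 1/ψ := by
      rw [le_div_iff₀ hψ0]; linarith
    linarith
  refine le_trans ?_ (H x hx R hR (le_trans hRle (min_le_left _ _)))
  have h2 : (R ^ (1 - 1/ψ)) ^ s' ≤ (R ^ (1 - 1/ψ)) ^ s :=
    Real.rpow_le_rpow_of_exponent_le hb hss'
  calc c * (R ^ (1 - 1/ψ)) ^ s' * fb μ x (R ^ (1/ψ)) ≤ c * (R ^ (1 - 1/ψ)) ^ s * fb μ x (R ^ (1/ψ)) :=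
    mul_le_mul_of_nonneg_right (mul_le_mul_of_nonneg_left h2 hc.le) (fb_nonneg μ x _)
  _ = _ := rfl

lemma grid_lemma {q : ℝ} (hq : 1 < q) :
    ∀ (N : ℕ) (t : ℝ), 1 ≤ t → t ≤ q ^ N → ∃ i : ℕ, i ≤ N ∧ q ^ i ≤ t ∧ t ≤ q ^ (i+1) := by
  intro N
  induction N with
  | zero =>
    intro t h1 h2
    refine ⟨0, le_refl 0, by simpa using h1, ?_⟩
    have h2' : t ≤ 1 := by simpa using h2
    calc t ≤ 1 := h2'
    _ ≤ q ^ (0+1) := by simpa using hq.le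
  | succ N ih =>
    intro t h1 h2
    by_cases h : t ≤ q ^ N
    · obtain ⟨i, hi, a, b⟩ := ih t h1 h
      exact ⟨i, hi.trans (Nat.le_succ N), a, b⟩
    · push_neg at h
      exact ⟨N, Nat.le_succ N, h.le, h2⟩

lemma prod_le_of_mem {g : ℕ → ℝ} {s : Finset ℕ} (h0 : ∀ j ∈ s, 0 < g j)
    (h1 : ∀ j ∈ s, g j ≤ 1) {i : ℕ} (hi : i ∈ s) : ∏ j ∈ s, g j ≤ g i := by
  classical
  rw [← Finset.mul_prod_erase s g hi]
  have h2 : ∏ j ∈ s.erase i, g j ≤ 1 :=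
    Finset.prod_le_one (fun j hj => (h0 j (Finset.mem_of_mem_erase hj)).le)
      (fun j hj => h1 j (Finset.mem_of_mem_erase hj))
  have h3 : (0:ℝ) ≤ ∏ j ∈ s.erase i, g j :=
    Finset.prod_nonneg (fun j hj => (h0 j (Finset.mem_of_mem_erase hj)).le)
  nlinarith [(h0 i hi)]

end Aux
section Aux2

variable {X : Type*} [MetricSpace X] [MeasurableSpace X]

/-- members of lSet are bounded by any element of the corresponding upperHSet,
provided the support is nonempty. -/
lemma lSet_le (μ : Measure X) [IsProbabilityMeasure μ] {x₀ : X} (hx₀ : x₀ ∈ msupp μ)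
    {ψ : ℝ} (hψ0 : 0 < ψ) (hψ1 : ψ < 1) {s' : ℝ}
    (hs' : s' ∈ upperHSet μ (1/ψ - 1)) {s : ℝ} (hs : s ∈ lSet μ ψ) : s ≤ s' := by
  by_contra hcon
  push_neg at hcon   -- s' < s
  obtain ⟨hs0, c, hc, R₀, hR₀, H⟩ := hs
  obtain ⟨hs'0, c₁, hc₁, c₂, hc₂, H'⟩ := hs'
  have hψψ : (1:ℝ) < 1/ψ := by rw [lt_div_iff₀ hψ0]; linarith
  set β : ℝ := (1/ψ - 1) * (s - s') with hβ
  have hβ0 : 0 < β := by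
    apply mul_pos (by linarith) (by linarith)
  set R : ℝ := min (min R₀ (min c₁ 1)) (min (1/2) ((c/(2*c₂)) ^ (1/β : ℝ))) with hRdef
  have hR : 0 < R := by
    apply lt_min (lt_min hR₀ (lt_min hc₁ one_pos))
    exact lt_min (by norm_num) (Real.rpow_pos_of_pos (by positivity) _)
  have hR1 : R ≤ 1 := le_trans (min_le_left _ _) (le_trans (min_le_right _ _) (min_le_right _ _))
  have hRR₀ : R ≤ R₀ := le_trans (min_le_left _ _) (min_le_left _ _)
  have hRc₁ : R ≤ c₁ := le_trans (min_le_left _ _) (le_trans (min_le_right _ _) (min_le_left _ _))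
  have hRβ : R ^ β ≤ c/(2*c₂) := by
    have h1 : R ≤ (c/(2*c₂)) ^ (1/β : ℝ) := le_trans (min_le_right _ _) (min_le_right _ _)
    calc R ^ β ≤ ((c/(2*c₂)) ^ (1/β : ℝ)) ^ β := Real.rpow_le_rpow hR.le h1 hβ0.le
    _ = (c/(2*c₂)) ^ ((1/β) * β) := (Real.rpow_mul (by positivity) _ _).symm
    _ = c/(2*c₂) := by rw [one_div_mul_cancel hβ0.ne', Real.rpow_one]
  -- lower bound
  have low := H x₀ hx₀ R hR hRR₀
  -- upper bound via quasi-Assouad data at δ = 1/ψ - 1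
  have hexp : 1 + (1/ψ - 1) = 1/ψ := by ring
  have hR1ψ : R ^ (1/ψ : ℝ) ≤ R := by
    calc R ^ (1/ψ : ℝ) ≤ R ^ (1:ℝ) := Real.rpow_le_rpow_of_exponent_ge hR hR1 hψψ.le
    _ = R := Real.rpow_one R
  have up := H' x₀ hx₀ (R ^ (1/ψ : ℝ)) R (Real.rpow_pos_of_pos hR _) hR
    (by rw [hexp]) (by rw [hexp]; exact le_trans hR1ψ hRc₁)
  have hdiv : R / R ^ (1/ψ : ℝ) = R ^ (1 - 1/ψ) := by
    rw [Real.rpow_sub hR, Real.rpow_one]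
  rw [hdiv] at up
  have hF : 0 < fb μ x₀ (R ^ (1/ψ : ℝ)) := fb_pos μ hx₀ (Real.rpow_pos_of_pos hR _)
  -- combine: c * b^s ≤ c₂ * b^{s'} where b = R^{1-1/ψ}
  have key : c * (R ^ (1 - 1/ψ)) ^ s ≤ c₂ * (R ^ (1 - 1/ψ)) ^ s' := by
    have := le_trans low up
    exact le_of_mul_le_mul_right this hF
  have hbpos : (0:ℝ) < R ^ (1 - 1/ψ) := Real.rpow_pos_of_pos hR _
  have hsplit : (R ^ ((1:ℝ) - 1/ψ)) ^ s = (R ^ ((1:ℝ) - 1/ψ)) ^ s' * R ^ (-β) := by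
    rw [← Real.rpow_mul hR.le, ← Real.rpow_mul hR.le, ← Real.rpow_add hR]
    congr 1; rw [hβ]; ring
  rw [hsplit] at key
  have key2 : c * R ^ (-β) ≤ c₂ := by
    have h' : (c * R ^ (-β)) * (R ^ ((1:ℝ) - 1/ψ)) ^ s' ≤ c₂ * (R ^ ((1:ℝ) - 1/ψ)) ^ s' := by
      calc (c * R ^ (-β)) * (R ^ ((1:ℝ) - 1/ψ)) ^ s'
          = c * ((R ^ ((1:ℝ) - 1/ψ)) ^ s' * R ^ (-β)) := by ring
      _ ≤ c₂ * (R ^ ((1:ℝ) - 1/ψ)) ^ s' := key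
    exact le_of_mul_le_mul_right h' (Real.rpow_pos_of_pos hbpos s')
  have hRβpos : 0 < R ^ β := Real.rpow_pos_of_pos hR β
  have hcc : c ≤ c₂ * R ^ β := by
    rw [Real.rpow_neg hR.le] at key2
    calc c = c * (R^β)⁻¹ * R^β := by field_simp
    _ ≤ c₂ * R^β := mul_le_mul_of_nonneg_right key2 hRβpos.le
  have hfin : c ≤ c/2 := by
    calc c ≤ c₂ * R^β := hcc
    _ ≤ c₂ * (c/(2*c₂)) := mul_le_mul_of_nonneg_left hRβ hc₂.le
    _ = c/2 := by field_simp
  linarith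

end Aux2
section Engine
set_option maxHeartbeats 1000000

variable {X : Type*} [MetricSpace X] [MeasurableSpace X]

lemma upper_hard (μ : Measure X) [IsProbabilityMeasure μ]
    {D : ℝ} (hqA' : ∀ δ : ℝ, 0 < δ → ∃ s ∈ upperHSet μ δ, s ≤ D)
    {θ : ℝ} (hθ0 : 0 < θ) (hθ1 : θ < 1)
    {S : ℝ} (hS0 : 0 ≤ S)
    (hmem : ∀ ε' > (0:ℝ), ∀ ψ : ℝ, 0 < ψ → ψ ≤ θ → (S + ε') ∈ uSet μ ψ)
    {ε : ℝ} (hε : 0 < ε) : (S + ε) ∈ upperHSet μ (1/θ - 1) := by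
  classical
  set T := 1/θ with hT
  have hT1 : 1 < T := by rw [hT, lt_div_iff₀ hθ0]; linarith
  have hT0 : 0 < T := lt_trans one_pos hT1
  have hTT2 : T ≤ T^2 := by
    rw [pow_two]
    calc T = 1*T := (one_mul T).symm
    _ ≤ T*T := mul_le_mul_of_nonneg_right hT1.le hT0.le
  obtain ⟨s₀, hs₀mem, hs₀D⟩ := hqA' 1 one_pos
  have hD0 : 0 ≤ D := le_trans hs₀mem.1 hs₀D
  set η : ℝ := (T - 1) * ε / (8 * (D + 1) * T^2) with hη
  have hηpos : 0 < η := div_pos (mul_pos (by linarith) hε) (by positivity)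
  set q := 1 + η with hq
  have hq1 : 1 < q := by rw [hq]; linarith
  obtain ⟨N, hN⟩ := pow_unbounded_of_one_lt T hq1
  obtain ⟨s', hs'H, hs'D⟩ := hqA' η hηpos
  obtain ⟨hs'0, c₁, hc₁, c₂, hc₂, Hq⟩ := hs'H
  -- per-grid-point "=ψ" estimates
  have hstar : ∀ i : ℕ, ∃ c R₀ : ℝ, 0 < c ∧ 0 < R₀ ∧ R₀ ≤ 1 ∧ ∀ x ∈ msupp μ, ∀ R : ℝ,
      0 < R → R ≤ R₀ → fb μ x R ≤ c * R ^ ((1 - T*q^i) * (S + ε/4)) * fb μ x (R ^ (T*q^i)) := by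
    intro i
    have hqi1 : (1:ℝ) ≤ q ^ i := one_le_pow₀ hq1.le
    have ha0 : 0 < T * q ^ i := by positivity
    have hψ0 : 0 < 1/(T * q^i) := by positivity
    have hψθ : 1/(T * q^i) ≤ θ := by
      rw [div_le_iff₀ ha0]
      have hθT : θ * T = 1 := by rw [hT]; field_simp
      have h5 : θ * (T * q^i) = (θ*T) * q^i := by ring
      rw [h5, hθT, one_mul]
      exact hqi1
    obtain ⟨h0, c, hc, R₀, hR₀, H⟩ := hmem (ε/4) (by positivity) _ hψ0 hψθ
    refine ⟨c, min R₀ 1, hc, by positivity, min_le_right _ _, ?_⟩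
    intro x hx R hR hRle
    have key := H x hx R hR (le_trans hRle (min_le_left _ _))
    rw [one_div_one_div] at key
    rwa [← Real.rpow_mul hR.le] at key
  choose cf Rf hc hR0 hR1 hP using hstar
  -- window constants
  set cA := (∑ i ∈ Finset.range (N+2), cf i) * c₂ + 1 with hcA
  have hsum0 : 0 ≤ ∑ i ∈ Finset.range (N+2), cf i :=
    Finset.sum_nonneg (fun i _ => (hc i).le)
  have hcA1 : 1 ≤ cA := by
    have := mul_nonneg hsum0 hc₂.le
    rw [hcA]; linarith
  have hcA0 : 0 < cA := by linarith
  have hcAi : ∀ i ∈ Finset.range (N+2), cf i * c₂ ≤ cA := by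
    intro i hi
    have h1 : cf i ≤ ∑ j ∈ Finset.range (N+2), cf j :=
      Finset.single_le_sum (fun j _ => (hc j).le) hi
    have h2 := mul_le_mul_of_nonneg_right h1 hc₂.le
    rw [hcA]; linarith
  set RA := min (∏ i ∈ Finset.range (N+2), Rf i) (min c₁ (1/2)) with hRA
  have hRA0 : 0 < RA :=
    lt_min (Finset.prod_pos (fun i _ => hR0 i)) (lt_min hc₁ (by norm_num))
  have hRA1 : RA ≤ 1/2 := le_trans (min_le_right _ _) (min_le_right _ _)
  have hRAc₁ : RA ≤ c₁ := le_trans (min_le_right _ _) (min_le_left _ _)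
  have hRAf : ∀ i ∈ Finset.range (N+2), RA ≤ Rf i := fun i hi =>
    le_trans (min_le_left _ _) (prod_le_of_mem (fun j _ => hR0 j) (fun j _ => hR1 j) hi)
  -- the window estimate
  have W : ∀ x ∈ msupp μ, ∀ R : ℝ, 0 < R → R ≤ RA → ∀ t : ℝ, T ≤ t → t ≤ T^2 →
      fb μ x R ≤ cA * R ^ ((1-t)*(S+ε/2)) * fb μ x (R^t) := by
    intro x hx R hR hRle t hTt htT2
    have hR1' : R ≤ 1 := by linarith [le_trans hRle hRA1]
    have h1 : (1:ℝ) ≤ t / T := by rw [le_div_iff₀ hT0]; linarith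
    have h2 : t / T ≤ q ^ N := by
      rw [div_le_iff₀ hT0]
      calc t ≤ T^2 := htT2
      _ = T*T := pow_two T
      _ ≤ q^N*T := mul_le_mul_of_nonneg_right hN.le hT0.le
    obtain ⟨i, hiN, hgl, hgr⟩ := grid_lemma hq1 N (t/T) h1 h2
    have hiR : i ∈ Finset.range (N+2) := Finset.mem_range.mpr (by omega)
    set a := T * q^i with ha
    have hqi1 : (1:ℝ) ≤ q ^ i := one_le_pow₀ hq1.le
    have ha1 : 1 < a := by
      rw [ha]
      calc (1:ℝ) < T := hT1
      _ = T*1 := (mul_one T).symm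
      _ ≤ T*q^i := mul_le_mul_of_nonneg_left hqi1 hT0.le
    have hat : a ≤ t := by rw [ha, mul_comm]; exact (le_div_iff₀ hT0).mp hgl
    have hta : t ≤ a * q := by
      have h3 := (div_le_iff₀ hT0).mp hgr
      rw [pow_succ] at h3
      calc t ≤ q^i*q*T := h3
      _ = a*q := by rw [ha]; ring
    have haT2 : a ≤ T^2 := le_trans hat htT2
    set t' := max t (a*(1+η)) with ht'
    have htt' : t ≤ t' := le_max_left _ _
    have hat' : a*(1+η) ≤ t' := le_max_right _ _
    have ht'a : a ≤ t' := le_trans hat htt'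
    have haη : a*η ≤ T^2*η := mul_le_mul_of_nonneg_right haT2 hηpos.le
    have hT2η : 0 ≤ T^2*η := by positivity
    have haq : a*q = a + a*η := by rw [hq]; ring
    have ht'bound : t' ≤ a + 2*T^2*η := by
      apply max_le
      · linarith
      · linarith [mul_le_mul_of_nonneg_left (le_refl η) (le_of_lt hT0)]
    have hηeq : η * (8 * (D+1) * T^2) = (T-1)*ε := by
      rw [hη]; field_simp
    have e1 : (a-1)*(S+ε/4) ≤ (t-1)*(S+ε/4) :=
      mul_le_mul_of_nonneg_right (by linarith) (by linarith)
    have e2 : (t'-a)*s' ≤ (t'-a)*D := mul_le_mul_of_nonneg_left hs'D (by linarith)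
    have e2b : (t'-a)*D ≤ (2*T^2*η)*D := mul_le_mul_of_nonneg_right (by linarith) hD0
    have e3 : (2*T^2*η)*D ≤ (T-1)*(ε/4) := by
      have h6 : (2*T^2*η)*D ≤ (2*T^2*η)*(D+1) :=
        mul_le_mul_of_nonneg_left (by linarith) (by positivity)
      have h7 : (2*T^2*η)*(D+1) = (1/4)*(η*(8*(D+1)*T^2)) := by ring
      rw [h7, hηeq] at h6
      linarith
    have e4 : (T-1)*(ε/4) ≤ (t-1)*(ε/4) :=
      mul_le_mul_of_nonneg_right (by linarith) (by linarith)
    have hexp : (1-t)*(S+ε/2) ≤ (1-a)*(S+ε/4) + (a-t')*s' := by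
      linarith only [e1, e2, e2b, e3, e4]
    have step1 := hP i x hx R hR (le_trans hRle (hRAf i hiR))
    have hRa : 0 < R ^ a := Real.rpow_pos_of_pos hR a
    have hRt'pos : 0 < R ^ t' := Real.rpow_pos_of_pos hR t'
    have cond1 : R ^ t' ≤ (R ^ a) ^ (1+η) := by
      rw [← Real.rpow_mul hR.le]
      exact Real.rpow_le_rpow_of_exponent_ge hR hR1' hat'
    have cond2 : (R ^ a) ^ (1+η) ≤ c₁ := by
      rw [← Real.rpow_mul hR.le]
      have h1η : (1:ℝ) ≤ a*(1+η) := by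
        have := mul_le_mul ha1.le (by linarith : (1:ℝ) ≤ 1+η) one_pos.le (by linarith : (0:ℝ) ≤ a)
        simpa using this
      calc R ^ (a*(1+η)) ≤ R ^ (1:ℝ) :=
        Real.rpow_le_rpow_of_exponent_ge hR hR1' h1η
      _ = R := Real.rpow_one R
      _ ≤ c₁ := le_trans hRle hRAc₁
    have step2 := Hq x hx (R ^ t') (R ^ a) hRt'pos hRa cond1 cond2
    have hdiv2 : R ^ a / R ^ t' = R ^ (a - t') := (Real.rpow_sub hR a t').symm
    rw [hdiv2, ← Real.rpow_mul hR.le] at step2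
    have step3 : fb μ x (R ^ t') ≤ fb μ x (R ^ t) :=
      fb_mono μ x (Real.rpow_le_rpow_of_exponent_ge hR hR1' htt')
    have hcomb : fb μ x R ≤ (cf i * c₂) * R ^ ((1-a)*(S+ε/4) + (a-t')*s') * fb μ x (R^t) := by
      calc fb μ x R ≤ cf i * R ^ ((1-a)*(S+ε/4)) * fb μ x (R^a) := step1
      _ ≤ cf i * R ^ ((1-a)*(S+ε/4)) * (c₂ * R ^ ((a-t')*s') * fb μ x (R^t)) := by
          apply mul_le_mul_of_nonneg_left _ (mul_nonneg (hc i).le (Real.rpow_nonneg hR.le _))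
          exact le_trans step2 (mul_le_mul_of_nonneg_left step3
            (mul_nonneg hc₂.le (Real.rpow_nonneg hR.le _)))
      _ = (cf i * c₂) * (R ^ ((1-a)*(S+ε/4)) * R ^ ((a-t')*s')) * fb μ x (R^t) := by ring
      _ = (cf i * c₂) * R ^ ((1-a)*(S+ε/4) + (a-t')*s') * fb μ x (R^t) := by
          rw [← Real.rpow_add hR]
    refine le_trans hcomb ?_
    apply mul_le_mul_of_nonneg_right _ (fb_nonneg μ x _)
    exact mul_le_mul (hcAi i hiR) (Real.rpow_le_rpow_of_exponent_ge hR hR1' hexp)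
      (Real.rpow_nonneg hR.le _) hcA0.le
  -- composition
  set γ := (T-1)*(ε/2) with hγdef
  have hγ : 0 < γ := mul_pos (by linarith) (by linarith)
  set RB := min RA ((1/cA) ^ (1/γ : ℝ)) with hRB
  have hRB0 : 0 < RB := lt_min hRA0 (Real.rpow_pos_of_pos (by positivity) _)
  have hRBA : RB ≤ RA := min_le_left _ _
  have habsorb : ∀ R : ℝ, 0 < R → R ≤ RB → cA * cA * R ^ γ ≤ cA := by
    intro R hR hRle
    have h1 : R ^ γ ≤ 1/cA := by
      calc R ^ γ ≤ ((1/cA) ^ (1/γ:ℝ)) ^ γ :=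
        Real.rpow_le_rpow hR.le (le_trans hRle (min_le_right _ _)) hγ.le
      _ = (1/cA) ^ ((1/γ)*γ) := (Real.rpow_mul (by positivity) _ _).symm
      _ = 1/cA := by rw [one_div_mul_cancel hγ.ne', Real.rpow_one]
    calc cA * cA * R ^ γ ≤ cA * cA * (1/cA) :=
      mul_le_mul_of_nonneg_left h1 (by positivity)
    _ = cA := by field_simp
  have base : ∀ x ∈ msupp μ, ∀ R : ℝ, 0 < R → R ≤ RB → ∀ t : ℝ, T ≤ t → t ≤ T^2 →
      fb μ x R ≤ cA * R ^ ((1-t)*(S+ε)) * fb μ x (R^t) := by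
    intro x hx R hR hRle t h1 h2
    have hR1' : R ≤ 1 := by linarith [le_trans (le_trans hRle hRBA) hRA1]
    refine le_trans (W x hx R hR (le_trans hRle hRBA) t h1 h2) ?_
    apply mul_le_mul_of_nonneg_right _ (fb_nonneg μ x _)
    apply mul_le_mul_of_nonneg_left _ hcA0.le
    have h5 : (1-t)*(ε/2) ≤ 0 := mul_nonpos_iff.mpr (Or.inr ⟨by linarith, by linarith⟩)
    apply Real.rpow_le_rpow_of_exponent_ge hR hR1'
    linarith only [h5]
  have comp : ∀ n : ℕ, ∀ x ∈ msupp μ, ∀ R : ℝ, 0 < R → R ≤ RB → ∀ t : ℝ, T ≤ t →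
      t ≤ T^(n+2) → fb μ x R ≤ cA * R ^ ((1-t)*(S+ε)) * fb μ x (R^t) := by
    intro n
    induction n with
    | zero => exact base
    | succ n ih =>
      intro x hx R hR hRle t h1 h2
      by_cases hcase : t ≤ T^2
      · exact base x hx R hR hRle t h1 hcase
      · push_neg at hcase
        have hR1' : R ≤ 1 := by linarith [le_trans (le_trans hRle hRBA) hRA1]
        have h1' : T ≤ t/T := by
          rw [le_div_iff₀ hT0]
          have := pow_two T
          linarith
        have h2' : t/T ≤ T^(n+2) := by
          rw [div_le_iff₀ hT0]
          have hps : T^(n+2)*T = T^(n+3) := (pow_succ T (n+2)).symm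
          have h2'' : t ≤ T^(n+3) := h2
          linarith
        have hRT : R ^ T ≤ R := by
          calc R ^ T ≤ R ^ (1:ℝ) := Real.rpow_le_rpow_of_exponent_ge hR hR1' hT1.le
          _ = R := Real.rpow_one R
        have hRTpos : 0 < R ^ T := Real.rpow_pos_of_pos hR T
        have s1 := W x hx R hR (le_trans hRle hRBA) T le_rfl hTT2
        have s2 := ih x hx (R^T) hRTpos (le_trans hRT hRle) (t/T) h1' h2'
        have e1 : (R^T)^(t/T) = R^t := by
          rw [← Real.rpow_mul hR.le]
          congr 1
          field_simp
        have e2 : (R^T)^((1-t/T)*(S+ε)) = R^((T-t)*(S+ε)) := by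
          rw [← Real.rpow_mul hR.le]
          congr 1
          field_simp
        rw [e1, e2] at s2
        have hmul : R ^ ((1-T)*(S+ε/2)) * R ^ ((T-t)*(S+ε)) = R ^ γ * R ^ ((1-t)*(S+ε)) := by
          rw [← Real.rpow_add hR, ← Real.rpow_add hR]
          congr 1
          rw [hγdef]; ring
        calc fb μ x R ≤ cA * R ^ ((1-T)*(S+ε/2)) * fb μ x (R^T) := s1
        _ ≤ cA * R ^ ((1-T)*(S+ε/2)) * (cA * R ^ ((T-t)*(S+ε)) * fb μ x (R^t)) :=
            mul_le_mul_of_nonneg_left s2 (by positivity)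
        _ = (cA * cA) * (R ^ ((1-T)*(S+ε/2)) * R ^ ((T-t)*(S+ε))) * fb μ x (R^t) := by ring
        _ = (cA * cA * R ^ γ) * R ^ ((1-t)*(S+ε)) * fb μ x (R^t) := by rw [hmul]; ring
        _ ≤ cA * R ^ ((1-t)*(S+ε)) * fb μ x (R^t) := by
            apply mul_le_mul_of_nonneg_right _ (fb_nonneg μ x _)
            exact mul_le_mul_of_nonneg_right (habsorb R hR hRle) (Real.rpow_nonneg hR.le _)
  -- final membership
  refine ⟨by linarith, min (RB ^ T) (1/2), by positivity, cA, hcA0, ?_⟩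
  intro x hx r R hr hR hrR hRc
  have hTeq : 1 + (1/θ - 1) = T := by rw [hT]; ring
  rw [hTeq] at hrR hRc
  have hRBT : R ^ T ≤ RB ^ T := le_trans hRc (min_le_left _ _)
  have hRRB : R ≤ RB := by
    have h := Real.rpow_le_rpow (Real.rpow_nonneg hR.le T) hRBT
      (by positivity : (0:ℝ) ≤ 1/T)
    rwa [← Real.rpow_mul hR.le, ← Real.rpow_mul hRB0.le, mul_one_div_cancel hT0.ne',
      Real.rpow_one, Real.rpow_one] at h
  have hRlt1 : R < 1 := by
    by_contra hge
    push_neg at hge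
    have hh : (1:ℝ) ≤ R ^ T := by
      calc (1:ℝ) = 1 ^ (T:ℝ) := (Real.one_rpow T).symm
      _ ≤ R ^ T := Real.rpow_le_rpow (by norm_num) hge hT0.le
    have := le_trans hRc (min_le_right _ _)
    linarith
  have hlogR : Real.log R < 0 := Real.log_neg hR hRlt1
  set t := Real.log r / Real.log R with htdef
  have hrt : R ^ t = r := by
    rw [Real.rpow_def_of_pos hR, htdef, mul_comm, div_mul_cancel₀ _ hlogR.ne, Real.exp_log hr]
  have hTt : T ≤ t := by
    rw [htdef, le_div_iff_of_neg hlogR]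
    calc Real.log r ≤ Real.log (R ^ T) := Real.log_le_log hr hrR
    _ = T * Real.log R := Real.log_rpow hR T
  obtain ⟨n, hn⟩ := pow_unbounded_of_one_lt t hT1
  have htn : t ≤ T ^ (n+2) := le_trans hn.le (pow_le_pow_right₀ hT1.le (by omega))
  have main := comp n x hx R hR hRRB t hTt htn
  rw [hrt] at main
  have hconv : R / r = R ^ ((1:ℝ) - t) := by
    rw [← hrt, Real.rpow_sub hR, Real.rpow_one]
  have hconv2 : R ^ ((1-t)*(S+ε)) = (R/r)^(S+ε) := by
    rw [hconv, ← Real.rpow_mul hR.le]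
  rwa [hconv2] at main

lemma lower_hard (μ : Measure X) [IsProbabilityMeasure μ]
    {D : ℝ} (hqA' : ∀ δ : ℝ, 0 < δ → ∃ s ∈ upperHSet μ δ, s ≤ D)
    {θ : ℝ} (hθ0 : 0 < θ) (hθ1 : θ < 1)
    {S ε : ℝ} (hε : 0 < ε) (hSε : 0 ≤ S - ε)
    (hmem : ∀ ψ : ℝ, 0 < ψ → ψ ≤ θ → (S - ε/4) ∈ lSet μ ψ) :
    (S - ε) ∈ lowerHSet μ (1/θ - 1) := by
  classical
  set T := 1/θ with hT
  have hT1 : 1 < T := by rw [hT, lt_div_iff₀ hθ0]; linarith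
  have hT0 : 0 < T := lt_trans one_pos hT1
  have hTT2 : T ≤ T^2 := by
    rw [pow_two]
    calc T = 1*T := (one_mul T).symm
    _ ≤ T*T := mul_le_mul_of_nonneg_right hT1.le hT0.le
  obtain ⟨s₀, hs₀mem, hs₀D⟩ := hqA' 1 one_pos
  have hD0 : 0 ≤ D := le_trans hs₀mem.1 hs₀D
  set η : ℝ := (T - 1) * ε / (8 * (D + 1) * T^2) with hη
  have hηpos : 0 < η := div_pos (mul_pos (by linarith) hε) (by positivity)
  set q := 1 + η with hq
  have hq1 : 1 < q := by rw [hq]; linarith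
  obtain ⟨N, hN⟩ := pow_unbounded_of_one_lt T hq1
  obtain ⟨s', hs'H, hs'D⟩ := hqA' η hηpos
  obtain ⟨hs'0, c₁, hc₁, c₂, hc₂, Hq⟩ := hs'H
  -- per-grid-point "=ψ" lower estimates, with constants normalized to (0,1]
  have hstar : ∀ i : ℕ, ∃ c R₀ : ℝ, 0 < c ∧ c ≤ 1 ∧ 0 < R₀ ∧ R₀ ≤ 1 ∧ ∀ x ∈ msupp μ, ∀ R : ℝ,
      0 < R → R ≤ R₀ → c * R ^ ((1 - T*q^i) * (S - ε/4)) * fb μ x (R ^ (T*q^i)) ≤ fb μ x R := by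
    intro i
    have hqi1 : (1:ℝ) ≤ q ^ i := one_le_pow₀ hq1.le
    have ha0 : 0 < T * q ^ i := by positivity
    have hψ0 : 0 < 1/(T * q^i) := by positivity
    have hψθ : 1/(T * q^i) ≤ θ := by
      rw [div_le_iff₀ ha0]
      have hθT : θ * T = 1 := by rw [hT]; field_simp
      have h5 : θ * (T * q^i) = (θ*T) * q^i := by ring
      rw [h5, hθT, one_mul]
      exact hqi1
    obtain ⟨h0, c, hc, R₀, hR₀, H⟩ := hmem _ hψ0 hψθ
    refine ⟨min c 1, min R₀ 1, lt_min hc one_pos, min_le_right _ _, by positivity,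
      min_le_right _ _, ?_⟩
    intro x hx R hR hRle
    have key := H x hx R hR (le_trans hRle (min_le_left _ _))
    rw [one_div_one_div] at key
    rw [← Real.rpow_mul hR.le] at key
    refine le_trans ?_ key
    apply mul_le_mul_of_nonneg_right _ (fb_nonneg μ x _)
    exact mul_le_mul_of_nonneg_right (min_le_left _ _) (Real.rpow_nonneg hR.le _)
  choose cf Rf hc hcle1 hR0 hR1 hP using hstar
  -- constants
  set cmin := ∏ i ∈ Finset.range (N+2), cf i with hcmin
  have hcmin0 : 0 < cmin := Finset.prod_pos (fun i _ => hc i)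
  have hcminle : ∀ i ∈ Finset.range (N+2), cmin ≤ cf i := fun i hi =>
    prod_le_of_mem (fun j _ => hc j) (fun j _ => hcle1 j) hi
  set cB := cmin / c₂ with hcBdef
  have hcB0 : 0 < cB := div_pos hcmin0 hc₂
  have hcB : cB * c₂ = cmin := div_mul_cancel₀ cmin hc₂.ne'
  set RA := min (∏ i ∈ Finset.range (N+2), Rf i) (min c₁ (1/2)) with hRA
  have hRA0 : 0 < RA :=
    lt_min (Finset.prod_pos (fun i _ => hR0 i)) (lt_min hc₁ (by norm_num))
  have hRA1 : RA ≤ 1/2 := le_trans (min_le_right _ _) (min_le_right _ _)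
  have hRAc₁ : RA ≤ c₁ := le_trans (min_le_right _ _) (min_le_left _ _)
  have hRAf : ∀ i ∈ Finset.range (N+2), RA ≤ Rf i := fun i hi =>
    le_trans (min_le_left _ _) (prod_le_of_mem (fun j _ => hR0 j) (fun j _ => hR1 j) hi)
  -- window estimate
  have W : ∀ x ∈ msupp μ, ∀ R : ℝ, 0 < R → R ≤ RA → ∀ t : ℝ, T ≤ t → t ≤ T^2 →
      cB * R ^ ((1-t)*(S-ε/2)) * fb μ x (R^t) ≤ fb μ x R := by
    intro x hx R hR hRle t hTt htT2
    have hR1' : R ≤ 1 := by linarith [le_trans hRle hRA1]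
    have h1 : (1:ℝ) ≤ t / T := by rw [le_div_iff₀ hT0]; linarith
    have h2 : t / T ≤ q ^ N := by
      rw [div_le_iff₀ hT0]
      calc t ≤ T^2 := htT2
      _ = T*T := pow_two T
      _ ≤ q^N*T := mul_le_mul_of_nonneg_right hN.le hT0.le
    obtain ⟨i, hiN, hgl, hgr⟩ := grid_lemma hq1 N (t/T) h1 h2
    have hjR : i+1 ∈ Finset.range (N+2) := Finset.mem_range.mpr (by omega)
    set a := T * q^(i+1) with ha
    have hqi1 : (1:ℝ) ≤ q ^ i := one_le_pow₀ hq1.le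
    have hta : t ≤ a := by
      rw [ha, mul_comm]
      exact (div_le_iff₀ hT0).mp hgr
    have hat : a ≤ t * q := by
      have h3 := (le_div_iff₀ hT0).mp hgl
      calc a = T*q^i*q := by rw [ha, pow_succ]; ring
      _ ≤ t*q := mul_le_mul_of_nonneg_right (by linarith [h3]) (by linarith)
    have ht1 : 1 < t := lt_of_lt_of_le hT1 hTt
    have htT2' : t ≤ T^2 := htT2
    set t' := max a (t*(1+η)) with ht'
    have hat' : a ≤ t' := le_max_left _ _
    have htt' : t ≤ t' := le_trans hta hat'
    have ht1η : t*(1+η) ≤ t' := le_max_right _ _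
    have htη : t*η ≤ T^2*η := mul_le_mul_of_nonneg_right htT2' hηpos.le
    have haq : t*q = t + t*η := by rw [hq]; ring
    have ht'bound : t' ≤ t + 2*T^2*η := by
      apply max_le
      · linarith
      · have : t*(1+η) = t + t*η := by ring
        linarith
    have hηeq : η * (8 * (D+1) * T^2) = (T-1)*ε := by
      rw [hη]; field_simp
    have e1 : (t-1)*(S-ε/4) ≤ (a-1)*(S-ε/4) :=
      mul_le_mul_of_nonneg_right (by linarith) (by linarith)
    have e2 : (t'-t)*s' ≤ (t'-t)*D := mul_le_mul_of_nonneg_left hs'D (by linarith)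
    have e2b : (t'-t)*D ≤ (2*T^2*η)*D := mul_le_mul_of_nonneg_right (by linarith) hD0
    have e3 : (2*T^2*η)*D ≤ (T-1)*(ε/4) := by
      have h6 : (2*T^2*η)*D ≤ (2*T^2*η)*(D+1) :=
        mul_le_mul_of_nonneg_left (by linarith) (by positivity)
      have h7 : (2*T^2*η)*(D+1) = (1/4)*(η*(8*(D+1)*T^2)) := by ring
      rw [h7, hηeq] at h6
      linarith
    have e4 : (T-1)*(ε/4) ≤ (t-1)*(ε/4) :=
      mul_le_mul_of_nonneg_right (by linarith) (by linarith)
    have hexp : (1-a)*(S-ε/4) ≤ (1-t)*(S-ε/2) + (t-t')*s' := by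
      linarith only [e1, e2, e2b, e3, e4]
    have step1 := hP (i+1) x hx R hR (le_trans hRle (hRAf _ hjR))
    have hRt : 0 < R ^ t := Real.rpow_pos_of_pos hR t
    have hRt'pos : 0 < R ^ t' := Real.rpow_pos_of_pos hR t'
    have cond1 : R ^ t' ≤ (R ^ t) ^ (1+η) := by
      rw [← Real.rpow_mul hR.le]
      exact Real.rpow_le_rpow_of_exponent_ge hR hR1' ht1η
    have cond2 : (R ^ t) ^ (1+η) ≤ c₁ := by
      rw [← Real.rpow_mul hR.le]
      have h1η : (1:ℝ) ≤ t*(1+η) := by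
        have := mul_le_mul ht1.le (by linarith : (1:ℝ) ≤ 1+η) one_pos.le (by linarith : (0:ℝ) ≤ t)
        simpa using this
      calc R ^ (t*(1+η)) ≤ R ^ (1:ℝ) :=
        Real.rpow_le_rpow_of_exponent_ge hR hR1' h1η
      _ = R := Real.rpow_one R
      _ ≤ c₁ := le_trans hRle hRAc₁
    have step2' := Hq x hx (R ^ t') (R ^ t) hRt'pos hRt cond1 cond2
    have hdiv2 : R ^ t / R ^ t' = R ^ (t - t') := (Real.rpow_sub hR t t').symm
    rw [hdiv2, ← Real.rpow_mul hR.le] at step2'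
    have step3 : fb μ x (R ^ t') ≤ fb μ x (R ^ a) :=
      fb_mono μ x (Real.rpow_le_rpow_of_exponent_ge hR hR1' hat')
    have step2 : fb μ x (R^t) ≤ c₂ * R ^ ((t-t')*s') * fb μ x (R^a) :=
      le_trans step2' (mul_le_mul_of_nonneg_left step3
        (mul_nonneg hc₂.le (Real.rpow_nonneg hR.le _)))
    calc cB * R ^ ((1-t)*(S-ε/2)) * fb μ x (R^t)
        ≤ cB * R ^ ((1-t)*(S-ε/2)) * (c₂ * R ^ ((t-t')*s') * fb μ x (R^a)) :=
          mul_le_mul_of_nonneg_left step2 (mul_nonneg hcB0.le (Real.rpow_nonneg hR.le _))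
    _ = (cB*c₂) * (R ^ ((1-t)*(S-ε/2)) * R ^ ((t-t')*s')) * fb μ x (R^a) := by ring
    _ = cmin * R ^ ((1-t)*(S-ε/2) + (t-t')*s') * fb μ x (R^a) := by
        rw [hcB, ← Real.rpow_add hR]
    _ ≤ cf (i+1) * R ^ ((1-a)*(S-ε/4)) * fb μ x (R^a) := by
        apply mul_le_mul_of_nonneg_right _ (fb_nonneg μ x _)
        exact mul_le_mul (hcminle _ hjR) (Real.rpow_le_rpow_of_exponent_ge hR hR1' hexp)
          (Real.rpow_nonneg hR.le _) (hc _).le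
    _ ≤ fb μ x R := step1
  -- composition
  set γ := (T-1)*(ε/2) with hγdef
  have hγ : 0 < γ := mul_pos (by linarith) (by linarith)
  set RB := min RA (cB ^ (1/γ : ℝ)) with hRB
  have hRB0 : 0 < RB := lt_min hRA0 (Real.rpow_pos_of_pos hcB0 _)
  have hRBA : RB ≤ RA := min_le_left _ _
  have hRγcB : ∀ R : ℝ, 0 < R → R ≤ RB → R ^ γ ≤ cB := by
    intro R hR hRle
    calc R ^ γ ≤ (cB ^ (1/γ:ℝ)) ^ γ :=
      Real.rpow_le_rpow hR.le (le_trans hRle (min_le_right _ _)) hγ.le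
    _ = cB ^ ((1/γ)*γ) := (Real.rpow_mul hcB0.le _ _).symm
    _ = cB := by rw [one_div_mul_cancel hγ.ne', Real.rpow_one]
  have base : ∀ x ∈ msupp μ, ∀ R : ℝ, 0 < R → R ≤ RB → ∀ t : ℝ, T ≤ t → t ≤ T^2 →
      cB * R ^ ((1-t)*(S-ε)) * fb μ x (R^t) ≤ fb μ x R := by
    intro x hx R hR hRle t h1 h2
    have hR1' : R ≤ 1 := by linarith [le_trans (le_trans hRle hRBA) hRA1]
    refine le_trans ?_ (W x hx R hR (le_trans hRle hRBA) t h1 h2)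
    apply mul_le_mul_of_nonneg_right _ (fb_nonneg μ x _)
    apply mul_le_mul_of_nonneg_left _ hcB0.le
    have h5 : 0 ≤ (t-1)*(ε/2) := mul_nonneg (by linarith) (by linarith)
    apply Real.rpow_le_rpow_of_exponent_ge hR hR1'
    linarith only [h5]
  have comp : ∀ n : ℕ, ∀ x ∈ msupp μ, ∀ R : ℝ, 0 < R → R ≤ RB → ∀ t : ℝ, T ≤ t →
      t ≤ T^(n+2) → cB * R ^ ((1-t)*(S-ε)) * fb μ x (R^t) ≤ fb μ x R := by
    intro n
    induction n with
    | zero => exact base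
    | succ n ih =>
      intro x hx R hR hRle t h1 h2
      by_cases hcase : t ≤ T^2
      · exact base x hx R hR hRle t h1 hcase
      · push_neg at hcase
        have hR1' : R ≤ 1 := by linarith [le_trans (le_trans hRle hRBA) hRA1]
        have h1' : T ≤ t/T := by
          rw [le_div_iff₀ hT0]
          have := pow_two T
          linarith
        have h2' : t/T ≤ T^(n+2) := by
          rw [div_le_iff₀ hT0]
          have hps : T^(n+2)*T = T^(n+3) := (pow_succ T (n+2)).symm
          have h2'' : t ≤ T^(n+3) := h2
          linarith
        have hRT : R ^ T ≤ R := by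
          calc R ^ T ≤ R ^ (1:ℝ) := Real.rpow_le_rpow_of_exponent_ge hR hR1' hT1.le
          _ = R := Real.rpow_one R
        have hRTpos : 0 < R ^ T := Real.rpow_pos_of_pos hR T
        have s1 := W x hx R hR (le_trans hRle hRBA) T le_rfl hTT2
        have s2 := ih x hx (R^T) hRTpos (le_trans hRT hRle) (t/T) h1' h2'
        have e1 : (R^T)^(t/T) = R^t := by
          rw [← Real.rpow_mul hR.le]
          congr 1
          field_simp
        have e2 : (R^T)^((1-t/T)*(S-ε)) = R^((T-t)*(S-ε)) := by
          rw [← Real.rpow_mul hR.le]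
          congr 1
          field_simp
        rw [e1, e2] at s2
        have hRγ1 : R ^ γ * R ^ (-γ) = 1 := by
          rw [← Real.rpow_add hR]
          simp
        have h8 : R ^ γ ≤ cB := hRγcB R hR hRle
        have hsplit : R ^ ((1-T)*(S-ε/2)) * R ^ ((T-t)*(S-ε)) = R ^ (-γ) * R ^ ((1-t)*(S-ε)) := by
          rw [← Real.rpow_add hR, ← Real.rpow_add hR]
          congr 1
          rw [hγdef]; ring
        have key2 : (cB * R ^ γ) * (R ^ (-γ) * R ^ ((1-t)*(S-ε)) * fb μ x (R^t)) ≤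
            (cB * cB) * (R ^ (-γ) * R ^ ((1-t)*(S-ε)) * fb μ x (R^t)) := by
          apply mul_le_mul_of_nonneg_right (mul_le_mul_of_nonneg_left h8 hcB0.le)
          have := fb_nonneg μ x (R^t)
          positivity
        calc cB * R ^ ((1-t)*(S-ε)) * fb μ x (R^t)
            = (cB * (R ^ γ * R ^ (-γ))) * R ^ ((1-t)*(S-ε)) * fb μ x (R^t) := by
              rw [hRγ1, mul_one]
        _ = (cB * R ^ γ) * (R ^ (-γ) * R ^ ((1-t)*(S-ε)) * fb μ x (R^t)) := by ring
        _ ≤ (cB * cB) * (R ^ (-γ) * R ^ ((1-t)*(S-ε)) * fb μ x (R^t)) := key2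
        _ = cB * R ^ ((1-T)*(S-ε/2)) * (cB * R ^ ((T-t)*(S-ε)) * fb μ x (R^t)) := by
              rw [← hsplit]; ring
        _ ≤ cB * R ^ ((1-T)*(S-ε/2)) * fb μ x (R^T) :=
              mul_le_mul_of_nonneg_left s2 (mul_nonneg hcB0.le (Real.rpow_nonneg hR.le _))
        _ ≤ fb μ x R := s1
  -- final membership
  refine ⟨hSε, min (RB ^ T) (1/2), by positivity, cB, hcB0, ?_⟩
  intro x hx r R hr hR hrR hRc
  have hTeq : 1 + (1/θ - 1) = T := by rw [hT]; ring
  rw [hTeq] at hrR hRc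
  have hRBT : R ^ T ≤ RB ^ T := le_trans hRc (min_le_left _ _)
  have hRRB : R ≤ RB := by
    have h := Real.rpow_le_rpow (Real.rpow_nonneg hR.le T) hRBT
      (by positivity : (0:ℝ) ≤ 1/T)
    rwa [← Real.rpow_mul hR.le, ← Real.rpow_mul hRB0.le, mul_one_div_cancel hT0.ne',
      Real.rpow_one, Real.rpow_one] at h
  have hRlt1 : R < 1 := by
    by_contra hge
    push_neg at hge
    have hh : (1:ℝ) ≤ R ^ T := by
      calc (1:ℝ) = 1 ^ (T:ℝ) := (Real.one_rpow T).symm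
      _ ≤ R ^ T := Real.rpow_le_rpow (by norm_num) hge hT0.le
    have := le_trans hRc (min_le_right _ _)
    linarith
  have hlogR : Real.log R < 0 := Real.log_neg hR hRlt1
  set t := Real.log r / Real.log R with htdef
  have hrt : R ^ t = r := by
    rw [Real.rpow_def_of_pos hR, htdef, mul_comm, div_mul_cancel₀ _ hlogR.ne, Real.exp_log hr]
  have hTt : T ≤ t := by
    rw [htdef, le_div_iff_of_neg hlogR]
    calc Real.log r ≤ Real.log (R ^ T) := Real.log_le_log hr hrR
    _ = T * Real.log R := Real.log_rpow hR T
  obtain ⟨n, hn⟩ := pow_unbounded_of_one_lt t hT1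
  have htn : t ≤ T ^ (n+2) := le_trans hn.le (pow_le_pow_right₀ hT1.le (by omega))
  have main := comp n x hx R hR hRRB t hTt htn
  rw [hrt] at main
  have hconv : R / r = R ^ ((1:ℝ) - t) := by
    rw [← hrt, Real.rpow_sub hR, Real.rpow_one]
  have hconv2 : R ^ ((1-t)*(S-ε)) = (R/r)^(S-ε) := by
    rw [hconv, ← Real.rpow_mul hR.le]
  rwa [hconv2] at main

end Engine
set_option maxHeartbeats 1000000 in
theorem assouad_spectrum_sup_inf
    {X : Type*} [MetricSpace X] [MeasurableSpace X] [BorelSpace X]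
    (μ : Measure X) [IsProbabilityMeasure μ] (hcpt : IsCompact (msupp μ))
    (hqA : ∃ D : ℝ, ∀ δ : ℝ, 0 < δ → ∃ s ∈ upperHSet μ δ, s ≤ D)
    (θ : ℝ) (hθ0 : 0 < θ) (hθ1 : θ < 1) :
    (sInf (upperHSet μ (1 / θ - 1)) = ⨆ ψ : {ψ : ℝ // 0 < ψ ∧ ψ ≤ θ}, upperEq μ ψ.1) ∧
    (sSup (lowerHSet μ (1 / θ - 1)) = ⨅ ψ : {ψ : ℝ // 0 < ψ ∧ ψ ≤ θ}, lowerEq μ ψ.1) := by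
  classical
  obtain ⟨D, hqA'⟩ := hqA
  haveI instNE : Nonempty {ψ : ℝ // 0 < ψ ∧ ψ ≤ θ} := ⟨⟨θ, hθ0, le_refl θ⟩⟩
  have hT1 : 1 < 1/θ := by rw [lt_div_iff₀ hθ0]; linarith
  have hδθ : 0 < 1/θ - 1 := by linarith
  have hψinv : ∀ ψ : ℝ, 0 < ψ → ψ ≤ θ → 1 + (1/θ - 1) ≤ 1/ψ := by
    intro ψ hψ0 hψθ
    have := one_div_le_one_div_of_le hψ0 hψθ
    linarith
  by_cases hE : msupp μ = ∅
  · -- empty support : everything degenerates to 0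
    have hvac : ∀ x : X, x ∉ msupp μ := by
      intro x hx
      rw [hE] at hx
      exact notMem_empty x hx
    have huH : upperHSet μ (1/θ - 1) = Ici 0 := by
      ext s
      constructor
      · exact fun h => h.1
      · intro h
        exact ⟨h, 1, one_pos, 1, one_pos, fun x hx => absurd hx (hvac x)⟩
    have hlH : lowerHSet μ (1/θ - 1) = Ici 0 := by
      ext s
      constructor
      · exact fun h => h.1
      · intro h
        exact ⟨h, 1, one_pos, 1, one_pos, fun x hx => absurd hx (hvac x)⟩
    have hnotbdd : ¬ BddAbove (Ici (0:ℝ)) := by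
      rintro ⟨b, hb⟩
      have h1 := hb (mem_Ici.mpr (le_max_left 0 (b+1)))
      have h2 := le_max_right 0 (b+1)
      linarith
    have hueq : ∀ ψ : {ψ : ℝ // 0 < ψ ∧ ψ ≤ θ}, upperEq μ ψ.1 = 0 := by
      intro ψ
      rw [upperEq_def]
      have : uSet μ ψ.1 = Ici 0 := by
        ext s
        constructor
        · exact fun h => h.1
        · intro h
          exact ⟨h, 1, one_pos, 1, one_pos, fun x hx => absurd hx (hvac x)⟩
      rw [this, csInf_Ici]
    have hleq : ∀ ψ : {ψ : ℝ // 0 < ψ ∧ ψ ≤ θ}, lowerEq μ ψ.1 = 0 := by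
      intro ψ
      rw [lowerEq_def]
      have : lSet μ ψ.1 = Ici 0 := by
        ext s
        constructor
        · exact fun h => h.1
        · intro h
          exact ⟨h, 1, one_pos, 1, one_pos, fun x hx => absurd hx (hvac x)⟩
      rw [this, Real.sSup_of_not_bddAbove hnotbdd]
    constructor
    · rw [huH, csInf_Ici]
      rw [iSup_congr hueq]
      exact (ciSup_const).symm
    · rw [hlH, Real.sSup_of_not_bddAbove hnotbdd]
      rw [iInf_congr hleq]
      exact (ciInf_const).symm
  · -- nonempty support
    obtain ⟨x₀, hx₀⟩ := nonempty_iff_ne_empty.mpr hE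
    -- UPPER part
    have hU_ne : (upperHSet μ (1/θ - 1)).Nonempty := by
      obtain ⟨s, hs, _⟩ := hqA' _ hδθ
      exact ⟨s, hs⟩
    have huSet_ne : ∀ ψ : ℝ, 0 < ψ → ψ ≤ θ → ∃ s ∈ uSet μ ψ, s ≤ D := by
      intro ψ hψ0 hψθ
      have hψ1 : ψ < 1 := lt_of_le_of_lt hψθ hθ1
      have hpos : 0 < 1/ψ - 1 := by
        have : 1 < 1/ψ := by rw [lt_div_iff₀ hψ0]; linarith
        linarith
      obtain ⟨s, hs, hsD⟩ := hqA' _ hpos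
      exact ⟨s, subU μ (by linarith) (by linarith) hs, hsD⟩
    have hbdd : BddAbove (range fun ψ : {ψ : ℝ // 0 < ψ ∧ ψ ≤ θ} => upperEq μ ψ.1) := by
      refine ⟨D, ?_⟩
      rintro y ⟨ψ, rfl⟩
      obtain ⟨s, hs, hsD⟩ := huSet_ne ψ.1 ψ.2.1 ψ.2.2
      exact le_trans (csInf_le (uSet_bddBelow μ _) hs) hsD
    set S := ⨆ ψ : {ψ : ℝ // 0 < ψ ∧ ψ ≤ θ}, upperEq μ ψ.1 with hSdef
    have hS0 : 0 ≤ S := by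
      refine le_trans ?_ (le_ciSup hbdd ⟨θ, hθ0, le_refl θ⟩)
      exact Real.sInf_nonneg (fun x hx => hx.1)
    have hmemS : ∀ ε' > (0:ℝ), ∀ ψ : ℝ, 0 < ψ → ψ ≤ θ → (S + ε') ∈ uSet μ ψ := by
      intro ε' hε' ψ hψ0 hψθ
      have h1 : upperEq μ ψ ≤ S := le_ciSup hbdd ⟨ψ, hψ0, hψθ⟩
      have h2 : sInf (uSet μ ψ) < S + ε' := by
        rw [← upperEq_def]; linarith
      obtain ⟨s, hs, _⟩ := huSet_ne ψ hψ0 hψθ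
      obtain ⟨a, ha, haS⟩ := exists_lt_of_csInf_lt ⟨s, hs⟩ h2
      exact uSet_upward μ hψ0 (by linarith [lt_of_le_of_lt hψθ hθ1]) ha haS.le
    have upper_eq : sInf (upperHSet μ (1/θ - 1)) = S := by
      apply le_antisymm
      · apply le_of_forall_pos_le_add
        intro ε hε
        exact csInf_le (upperHSet_bddBelow μ _) (upper_hard μ hqA' hθ0 hθ1 hS0 hmemS hε)
      · apply ciSup_le
        intro ψ
        apply le_csInf hU_ne
        intro b hb
        rw [upperEq_def]
        exact csInf_le (uSet_bddBelow μ _) (subU μ (by linarith) (hψinv ψ.1 ψ.2.1 ψ.2.2) hb)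
    -- LOWER part
    have hlbddA : ∀ ψ : ℝ, 0 < ψ → ψ ≤ θ → ∀ s ∈ lSet μ ψ, s ≤ D := by
      intro ψ hψ0 hψθ s hs
      have hψ1 : ψ < 1 := lt_of_le_of_lt hψθ hθ1
      have hpos : 0 < 1/ψ - 1 := by
        have : 1 < 1/ψ := by rw [lt_div_iff₀ hψ0]; linarith
        linarith
      obtain ⟨s', hs'H, hs'D⟩ := hqA' _ hpos
      exact le_trans (lSet_le μ hx₀ hψ0 hψ1 hs'H hs) hs'D
    have hlbdd : ∀ ψ : ℝ, 0 < ψ → ψ ≤ θ → BddAbove (lSet μ ψ) := fun ψ h1 h2 =>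
      ⟨D, fun s hs => hlbddA ψ h1 h2 s hs⟩
    have hl0 : ∀ ψ : ℝ, 0 < ψ → ψ ≤ θ → (0:ℝ) ∈ lSet μ ψ := by
      intro ψ hψ0 hψθ
      refine ⟨le_refl 0, 1, one_pos, 1, one_pos, ?_⟩
      intro x hx R hR hRle
      simp only [Real.rpow_zero, one_mul, mul_one]
      apply fb_mono
      have h9 : (1:ℝ) ≤ 1/ψ := by
        rw [le_div_iff₀ hψ0]; linarith [lt_of_le_of_lt hψθ hθ1]
      calc R ^ (1/ψ : ℝ) ≤ R ^ (1:ℝ) := Real.rpow_le_rpow_of_exponent_ge hR hRle h9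
      _ = R := Real.rpow_one R
    have hlEq0 : ∀ ψ : ℝ, 0 < ψ → ψ ≤ θ → 0 ≤ lowerEq μ ψ := by
      intro ψ h1 h2
      rw [lowerEq_def]
      exact le_csSup (hlbdd ψ h1 h2) (hl0 ψ h1 h2)
    have hbddBel : BddBelow (range fun ψ : {ψ : ℝ // 0 < ψ ∧ ψ ≤ θ} => lowerEq μ ψ.1) := by
      refine ⟨0, ?_⟩
      rintro y ⟨ψ, rfl⟩
      exact hlEq0 ψ.1 ψ.2.1 ψ.2.2
    set I := ⨅ ψ : {ψ : ℝ // 0 < ψ ∧ ψ ≤ θ}, lowerEq μ ψ.1 with hIdef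
    have hlH0 : (0:ℝ) ∈ lowerHSet μ (1/θ - 1) := by
      refine ⟨le_refl 0, 1, one_pos, 1, one_pos, ?_⟩
      intro x hx r R hr hR hrR hRc
      simp only [Real.rpow_zero, one_mul, mul_one]
      apply fb_mono
      have hR1 : R ≤ 1 := by
        by_contra hgt
        push_neg at hgt
        have : 1 < R ^ (1 + (1/θ-1)) :=
          (Real.one_lt_rpow_iff_of_pos hR).mpr (Or.inl ⟨hgt, by linarith⟩)
        linarith
      calc r ≤ R ^ (1 + (1/θ-1)) := hrR
      _ ≤ R ^ (1:ℝ) := Real.rpow_le_rpow_of_exponent_ge hR hR1 (by linarith)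
      _ = R := Real.rpow_one R
    have hlH_bdd : BddAbove (lowerHSet μ (1/θ - 1)) := by
      refine ⟨D, fun s hs => ?_⟩
      apply hlbddA θ hθ0 (le_refl θ) s
      exact subL μ (by linarith) (le_of_eq (by ring)) hs
    have hsSup0 : 0 ≤ sSup (lowerHSet μ (1/θ - 1)) := le_csSup hlH_bdd hlH0
    have lower_eq : sSup (lowerHSet μ (1/θ - 1)) = I := by
      apply le_antisymm
      · apply csSup_le ⟨0, hlH0⟩
        intro s hs
        apply le_ciInf
        intro ψ
        rw [lowerEq_def]
        exact le_csSup (hlbdd ψ.1 ψ.2.1 ψ.2.2)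
          (subL μ (by linarith) (hψinv ψ.1 ψ.2.1 ψ.2.2) hs)
      · apply le_of_forall_pos_le_add
        intro ε hε
        rcases le_or_gt I ε with h | h
        · linarith
        · have hmemL : ∀ ψ : ℝ, 0 < ψ → ψ ≤ θ → (I - ε/4) ∈ lSet μ ψ := by
            intro ψ hψ0 hψθ
            have h1 : I ≤ lowerEq μ ψ := ciInf_le hbddBel ⟨ψ, hψ0, hψθ⟩
            have h2 : I - ε/4 < sSup (lSet μ ψ) := by
              rw [← lowerEq_def]; linarith
            obtain ⟨a, ha, hlt⟩ := exists_lt_of_lt_csSup ⟨0, hl0 ψ hψ0 hψθ⟩ h2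
            exact lSet_downward μ hψ0 (by linarith [lt_of_le_of_lt hψθ hθ1]) ha
              (by linarith) hlt.le
          have hmem := lower_hard μ hqA' hθ0 hθ1 hε (by linarith) hmemL
          have := le_csSup hlH_bdd hmem
          linarith
    exact ⟨upper_eq, lower_eq⟩
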